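/- Let V be a vector space over a field, W a subspace, and S(W) a subsemigroup of L(W) that is a subgroup of Aut(W). Then L_{S(W)}(V) is a regular semigroup. -/
import Mathlib


open Set

/-- `S` is a subsemigroup of `L(M)` (closed under composition). -/
def LIsSubsemigroup {K M : Type*} [Field K] [AddCommGroup M] [Module K M]
    (S : Set (M →ₗ[K] M)) : Prop :=
  ∀ a ∈ S, ∀ b ∈ S, a ∘ₗ b ∈ S

/-- `S` is a subgroup of `Aut(M)`. -/
def LIsSubgroupOfAut {K M : Type*} [Field K] [AddCommGroup M] [Module K M]
    (S : Set (M →ₗ[K] M)) : Prop :=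
  LIsSubsemigroup S ∧ (∀ a ∈ S, Function.Bijective a) ∧ (LinearMap.id ∈ S) ∧
    ∀ a ∈ S, ∃ b ∈ S, a ∘ₗ b = LinearMap.id ∧ b ∘ₗ a = LinearMap.id

/-- `S` is a regular semigroup of linear maps: `∀ a ∈ S, ∃ b ∈ S, aba = a`
(composed left to right, i.e. `x ↦ a (b (a x))`). -/
def LIsRegularOn {K M : Type*} [Field K] [AddCommGroup M] [Module K M]
    (S : Set (M →ₗ[K] M)) : Prop :=
  ∀ a ∈ S, ∃ b ∈ S, a ∘ₗ b ∘ₗ a = a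

/-- `S` is an inverse semigroup of linear maps. -/
def LIsInverseOn {K M : Type*} [Field K] [AddCommGroup M] [Module K M]
    (S : Set (M →ₗ[K] M)) : Prop :=
  ∀ a ∈ S, ∃! b, b ∈ S ∧ a ∘ₗ b ∘ₗ a = a ∧ b ∘ₗ a ∘ₗ b = b

/-- `u` is a unit of the linear monoid `S`. -/
def LIsUnitOn {K M : Type*} [Field K] [AddCommGroup M] [Module K M]
    (S : Set (M →ₗ[K] M)) (u : M →ₗ[K] M) : Prop :=
  u ∈ S ∧ ∃ v ∈ S, u ∘ₗ v = LinearMap.id ∧ v ∘ₗ u = LinearMap.id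

/-- `a` is a unit-regular element of `S`. -/
def LUnitRegularElem {K M : Type*} [Field K] [AddCommGroup M] [Module K M]
    (S : Set (M →ₗ[K] M)) (a : M →ₗ[K] M) : Prop :=
  ∃ u, LIsUnitOn S u ∧ a ∘ₗ u ∘ₗ a = a

/-- `S` is a unit-regular linear monoid. -/
def LIsUnitRegularOn {K M : Type*} [Field K] [AddCommGroup M] [Module K M]
    (S : Set (M →ₗ[K] M)) : Prop :=
  ∀ a ∈ S, LUnitRegularElem S a

/-- `G` is a subgroup contained in the semigroup `S` of linear maps. -/
def LIsSubgroupIn {K M : Type*} [Field K] [AddCommGroup M] [Module K M]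
    (S G : Set (M →ₗ[K] M)) : Prop :=
  G ⊆ S ∧ (∀ a ∈ G, ∀ b ∈ G, a ∘ₗ b ∈ G) ∧
    ∃ e ∈ G, (∀ a ∈ G, a ∘ₗ e = a ∧ e ∘ₗ a = a) ∧
      ∀ a ∈ G, ∃ b ∈ G, a ∘ₗ b = e ∧ b ∘ₗ a = e

/-- `S` is a completely regular semigroup of linear maps: every element
belongs to a subgroup of `S`. -/
def LIsCompletelyRegularOn {K M : Type*} [Field K] [AddCommGroup M] [Module K M]
    (S : Set (M →ₗ[K] M)) : Prop :=
  ∀ a ∈ S, ∃ G, LIsSubgroupIn S G ∧ a ∈ G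

/-- The semigroup `L_{S(W)}(V)` of all linear self-maps of `V` that leave `W`
invariant and whose restriction to `W` lies in `S`. -/
def LSemi {K V : Type*} [Field K] [AddCommGroup V] [Module K V] (W : Submodule K V)
    (S : Set (W →ₗ[K] W)) : Set (V →ₗ[K] V) :=
  {f | ∃ h : ∀ x ∈ W, f x ∈ W, f.restrict h ∈ S}

theorem stmt10 {K V : Type*} [Field K] [AddCommGroup V] [Module K V]
    (W : Submodule K V) (S : Set (W →ₗ[K] W)) (hgrp : LIsSubgroupOfAut S) :
    LIsRegularOn (LSemi W S) := by
  obtain ⟨hclosed, hbij, hid, hinv⟩ := hgrp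
  rintro f ⟨hW, hS⟩
  set g := f.restrict hW with hgdef
  obtain ⟨g', hg'S, hgg', hg'g⟩ := hinv g hS
  have hginj : Function.Injective g := (hbij g hS).1
  -- coercion fact
  have hgco : ∀ x : W, (g x : V) = f x := fun x => rfl
  have hg'W : ∀ (w : V) (hw : w ∈ W), f ((g' ⟨w, hw⟩ : W) : V) = w := by
    intro w hw
    have := congrArg (fun (t : W →ₗ[K] W) => ((t ⟨w, hw⟩ : W) : V)) hgg'
    simpa [hgco] using this
  -- ker f is disjoint from W
  have hdisj : ∀ x ∈ W, f x = 0 → x = 0 := by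
    intro x hx hfx
    have : g ⟨x, hx⟩ = 0 := by
      apply Subtype.ext
      simpa [hgco] using hfx
    have := hginj (by simpa using this : g ⟨x, hx⟩ = g 0)
    exact congrArg Subtype.val this
  -- build the complement U of ker f containing W
  obtain ⟨U', hU'⟩ := Submodule.exists_isCompl (W ⊔ LinearMap.ker f)
  set U := W ⊔ U' with hUdef
  have hWU : W ≤ U := le_sup_left
  have hUcompl : IsCompl (LinearMap.ker f) U := by
    constructor
    · rw [disjoint_iff]
      ext x
      simp only [Submodule.mem_inf, Submodule.mem_bot]
      constructor
      · rintro ⟨hk, hx⟩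
        rw [hUdef] at hx
        obtain ⟨w, hw, u', hu', hsum⟩ := Submodule.mem_sup.mp hx
        have hu'mem : u' ∈ (W ⊔ LinearMap.ker f) ⊓ U' := by
          refine ⟨?_, hu'⟩
          have : u' = x - w := by rw [← hsum]; abel
          rw [this]
          exact Submodule.sub_mem _ (Submodule.mem_sup_right hk) (Submodule.mem_sup_left hw)
        have hu'0 : u' = 0 := by
          have := hU'.1.le_bot hu'mem
          simpa using this
        have hxw : x = w := by rw [← hsum, hu'0, add_zero]
        subst hxw
        exact hdisj x hw (LinearMap.mem_ker.mp hk)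
      · rintro rfl; exact ⟨Submodule.zero_mem _, Submodule.zero_mem _⟩
    · rw [codisjoint_iff]
      rw [eq_top_iff, ← hU'.2.eq_top]
      rw [hUdef]
      intro x hx
      obtain ⟨a, ha, b, hb, hsum⟩ := Submodule.mem_sup.mp hx
      obtain ⟨w, hw, k, hk, hsum2⟩ := Submodule.mem_sup.mp ha
      rw [← hsum, ← hsum2]
      exact Submodule.add_mem _ (Submodule.add_mem _
        (Submodule.mem_sup_right (Submodule.mem_sup_left hw))
        (Submodule.mem_sup_left hk))
        (Submodule.mem_sup_right (Submodule.mem_sup_right hb))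
  -- f restricted to U, corestricted to range f
  set fU : U →ₗ[K] LinearMap.range f :=
    (f ∘ₗ U.subtype).codRestrict (LinearMap.range f)
      (fun u => LinearMap.mem_range_self f (u : V)) with hfUdef
  have hfUapply : ∀ u : U, (fU u : V) = f u := fun u => rfl
  have hfUbij : Function.Bijective fU := by
    constructor
    · intro u₁ u₂ h
      have hf : f (u₁ : V) = f (u₂ : V) := by
        have := congrArg (Subtype.val) h
        simpa [hfUapply] using this
      have : (u₁ : V) - u₂ ∈ LinearMap.ker f ⊓ U := by
        refine ⟨LinearMap.mem_ker.mpr (by rw [map_sub, hf, sub_self]), Submodule.sub_mem _ u₁.2 u₂.2⟩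
      have := hUcompl.1.le_bot this
      exact Subtype.ext (by simpa [sub_eq_zero] using this)
    · rintro ⟨y, v, rfl⟩
      have hv : v ∈ LinearMap.ker f ⊔ U := by rw [hUcompl.2.eq_top]; trivial
      obtain ⟨k, hk, u, hu, hsum⟩ := Submodule.mem_sup.mp hv
      refine ⟨⟨u, hu⟩, ?_⟩
      apply Subtype.ext
      show f u = f v
      rw [← hsum, map_add, LinearMap.mem_ker.mp hk, zero_add]
  set e := LinearEquiv.ofBijective fU hfUbij with hedef
  obtain ⟨D, hD⟩ := Submodule.exists_isCompl (LinearMap.range f)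
  set proj := (LinearMap.range f).linearProjOfIsCompl D hD with hprojdef
  set b : V →ₗ[K] V := U.subtype ∘ₗ (e.symm : LinearMap.range f →ₗ[K] U) ∘ₗ proj with hbdef
  -- key computation: b y = e.symm ⟨y, _⟩ for y ∈ range f
  have hbapply : ∀ v : V, b v = ((e.symm (proj v) : U) : V) := fun v => rfl
  have hbr : ∀ (y : V) (hy : y ∈ LinearMap.range f), b y = ((e.symm ⟨y, hy⟩ : U) : V) := by
    intro y hy
    rw [hbapply,
      show proj y = ⟨y, hy⟩ from Submodule.linearProjOfIsCompl_apply_left hD ⟨y, hy⟩]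
  have hfb : ∀ (y : V) (hy : y ∈ LinearMap.range f), f (b y) = y := by
    intro y hy
    rw [hbr y hy]
    have h1 : e (e.symm ⟨y, hy⟩) = ⟨y, hy⟩ := e.apply_symm_apply _
    have h2 := congrArg Subtype.val h1
    rw [← hfUapply]
    exact h2
  -- b maps W to W, with restriction g'
  have hbW : ∀ (w : V) (hw : w ∈ W), b w = ((g' ⟨w, hw⟩ : W) : V) := by
    intro w hw
    have hwr : w ∈ LinearMap.range f := ⟨(g' ⟨w, hw⟩ : W), hg'W w hw⟩
    rw [hbr w hwr]
    have hmem : ((g' ⟨w, hw⟩ : W) : V) ∈ U := hWU (g' ⟨w, hw⟩).2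
    have h3 : e.symm ⟨w, hwr⟩ = ⟨((g' ⟨w, hw⟩ : W) : V), hmem⟩ := by
      rw [LinearEquiv.symm_apply_eq]
      refine Subtype.ext ?_
      show w = f ((g' ⟨w, hw⟩ : W) : V)
      exact (hg'W w hw).symm
    rw [h3]
  have hbWmem : ∀ x ∈ W, b x ∈ W := by
    intro x hx
    rw [hbW x hx]
    exact (g' ⟨x, hx⟩).2
  refine ⟨b, ⟨hbWmem, ?_⟩, ?_⟩
  · have hrestr : b.restrict hbWmem = g' := by
      ext x
      show b (x : V) = ((g' x : W) : V)
      rw [hbW (x : V) x.2]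
    rw [hrestr]; exact hg'S
  · ext v
    show f (b (f v)) = f v
    exact hfb (f v) (LinearMap.mem_range_self f v)
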